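/- With the data (E, v, G, V, α) as in the context, let β ∈ ℚ with 0 ≤ β < 1 and let p ≥ 0. Then: if β > α, F'_{α+p} ∩ V_β = Σ_{n≥0} v^n(G_p ∩ V_α) + (G_{p−1} ∩ V_β); and if β ≤ α, F'_{α+p} ∩ V_β = Σ_{n≥1} v^n(G_p ∩ V_α) + (G_p ∩ V_β). -/

import Mathlib

/-- `F'_{α+p} := Σ_{k+j ≤ p} (G_k ∩ V_{α+j})`. -/
def Fprime {R E : Type*} [CommRing R] [AddCommGroup E] [Module R E]
    (G : ℤ → Submodule R E) (V : ℚ → Submodule R E) (α : ℚ) (p : ℤ) :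
    Submodule R E :=
  ⨆ (k : ℤ) (j : ℤ) (_ : k + j ≤ p), (G k ⊓ V (α + (j : ℚ)))

/-- For `β ∈ [0,1)` and `p ≥ 0`:
if `β > α`, `F'_{α+p} ∩ V_β = Σ_{n≥0} v^n(G_p ∩ V_α) + (G_{p−1} ∩ V_β)`;
if `β ≤ α`, `F'_{α+p} ∩ V_β = Σ_{n≥1} v^n(G_p ∩ V_α) + (G_p ∩ V_β)`. -/
theorem stmt_13 {R E : Type*} [CommRing R] [AddCommGroup E] [Module R E]
    (v : E →ₗ[R] E) (hv : Function.Injective v)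
    (G : ℤ → Submodule R E) (hGmono : Monotone G)
    (hG0 : ∀ k : ℤ, k < 0 → G k = ⊥)
    (hGv : ∀ (m : ℤ) (n : ℕ),
      G m ⊓ LinearMap.range (v ^ n) = (G (m - n)).map (v ^ n))
    (V : ℚ → Submodule R E) (hVmono : Monotone V)
    (hVv : ∀ γ : ℚ, 0 ≤ γ → γ < 1 → ∀ k : ℕ, 1 ≤ k →
      V (γ - k) = (V γ).map (v ^ k))
    (α : ℚ) (hα0 : 0 ≤ α) (hα1 : α < 1)
    (β : ℚ) (hβ0 : 0 ≤ β) (hβ1 : β < 1) (p : ℤ) (hp : 0 ≤ p) :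
    (α < β →
      Fprime G V α p ⊓ V β =
        (⨆ n : ℕ, (G p ⊓ V α).map (v ^ n)) ⊔ (G (p - 1) ⊓ V β)) ∧
    (β ≤ α →
      Fprime G V α p ⊓ V β =
        (⨆ n : ℕ, (G p ⊓ V α).map (v ^ (n + 1))) ⊔ (G p ⊓ V β)) := by
  have hvn : ∀ n : ℕ, Function.Injective (⇑(v ^ n)) := by
    intro n
    rw [Module.End.coe_pow]
    exact hv.iterate n
  set S : Submodule R E := ⨆ n : ℕ, (G p ⊓ V α).map (v ^ n) with hSdef
  set S1 : Submodule R E := ⨆ n : ℕ, (G p ⊓ V α).map (v ^ (n + 1)) with hS1def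
  have hterm_le : ∀ (k j : ℤ), k + j ≤ p → G k ⊓ V (α + (j : ℚ)) ≤ Fprime G V α p := by
    intro k j h
    exact le_iSup_of_le k (le_iSup_of_le j (le_iSup_of_le h le_rfl))
  have hmapG : ∀ n : ℕ, (G p).map (v ^ n) ≤ G (p + n) := by
    intro n
    have h := hGv (p + n) n
    have h2 : (p + (n : ℤ)) - (n : ℤ) = p := by ring
    rw [h2] at h
    rw [← h]
    exact inf_le_left
  have hmapV : ∀ n : ℕ, (V α).map (v ^ (n + 1)) = V (α - ((n : ℚ) + 1)) := by
    intro n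
    have := (hVv α hα0 hα1 (n + 1) (Nat.le_add_left 1 n)).symm
    rw [this]
    push_cast
    ring_nf
  -- each S-generator is inside Fprime
  have hmapF : ∀ n : ℕ, (G p ⊓ V α).map (v ^ n) ≤ Fprime G V α p := by
    intro n
    refine le_trans (le_inf ?_ ?_) (hterm_le (p + n) (-(n : ℤ)) (by omega))
    · exact le_trans (Submodule.map_mono inf_le_left) (hmapG n)
    · cases n with
      | zero =>
        simp only [pow_zero, Module.End.one_eq_id, Submodule.map_id, Nat.cast_zero, neg_zero,
          Int.cast_zero, add_zero]
        exact inf_le_right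
      | succ m =>
        refine le_trans (Submodule.map_mono inf_le_right) ?_
        rw [hmapV m]
        apply hVmono
        push_cast
        ring_nf
        exact le_rfl
  -- the key structural inclusion : Fprime ≤ S ⊔ G (p-1)
  have hF_le : Fprime G V α p ≤ S ⊔ G (p - 1) := by
    refine iSup_le fun k => iSup_le fun j => iSup_le fun hkj => ?_
    rcases le_or_gt j 0 with hj | hj
    · refine le_trans ?_ le_sup_left
      refine le_trans ?_ (le_iSup (fun n : ℕ => (G p ⊓ V α).map (v ^ n)) (-j).toNat)
      rcases eq_or_lt_of_le hj with hj0 | hjneg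
      · -- j = 0
        subst hj0
        simp only [Int.cast_zero, add_zero, neg_zero, Int.toNat_zero, pow_zero,
          Module.End.one_eq_id, Submodule.map_id]
        exact inf_le_inf_right _ (hGmono (by omega))
      · -- j < 0
        set n := (-j).toNat with hn
        have hn1 : 1 ≤ n := by omega
        have hjn : j = -(n : ℤ) := by omega
        have hcast : α + (j : ℚ) = α - ((n : ℕ) : ℚ) := by
          rw [hjn]; push_cast; ring
        intro x hx
        obtain ⟨hxG, hxV⟩ := hx
        rw [hcast, hVv α hα0 hα1 n hn1] at hxV
        obtain ⟨y, hyV, hyx⟩ := hxV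
        have hxR : x ∈ G k ⊓ LinearMap.range (v ^ n) := ⟨hxG, ⟨y, hyx⟩⟩
        rw [hGv k n] at hxR
        obtain ⟨z, hzG, hzx⟩ := hxR
        have hzy : z = y := hvn n (by rw [hzx, hyx])
        subst hzy
        exact ⟨z, ⟨hGmono (by omega) hzG, hyV⟩, hzx⟩
    · -- 1 ≤ j
      refine le_trans ?_ le_sup_right
      exact le_trans inf_le_left (hGmono (by omega))
  have hS_le_Vα : S ≤ V α := by
    refine iSup_le fun n => ?_
    cases n with
    | zero =>
      simp only [pow_zero, Module.End.one_eq_id, Submodule.map_id]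
      exact inf_le_right
    | succ m =>
      refine le_trans (Submodule.map_mono inf_le_right) ?_
      rw [hmapV m]
      exact hVmono (by push_cast; linarith [Nat.cast_nonneg (α := ℚ) m])
  have hS1_le_Vβ : S1 ≤ V β := by
    refine iSup_le fun n => ?_
    refine le_trans (Submodule.map_mono inf_le_right) ?_
    rw [hmapV n]
    exact hVmono (by linarith [Nat.cast_nonneg (α := ℚ) n])
  have hS_le_F : S ≤ Fprime G V α p := iSup_le hmapF
  have hS1_le_F : S1 ≤ Fprime G V α p := iSup_le fun n => hmapF (n + 1)
  have hS_le_S1Gp : S ≤ S1 ⊔ G p := by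
    refine iSup_le fun n => ?_
    cases n with
    | zero =>
      refine le_trans ?_ le_sup_right
      simp only [pow_zero, Module.End.one_eq_id, Submodule.map_id]
      exact inf_le_left
    | succ m =>
      exact le_trans (le_iSup (fun n : ℕ => (G p ⊓ V α).map (v ^ (n + 1))) m) le_sup_left
  constructor
  · intro hαβ
    have hS_le_Vβ : S ≤ V β := le_trans hS_le_Vα (hVmono hαβ.le)
    apply le_antisymm
    · calc Fprime G V α p ⊓ V β ≤ (S ⊔ G (p - 1)) ⊓ V β := inf_le_inf_right _ hF_le
        _ = S ⊔ (G (p - 1) ⊓ V β) := by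
            rw [sup_inf_assoc_of_le _ hS_le_Vβ]
    · refine sup_le (le_inf hS_le_F hS_le_Vβ) (le_inf ?_ inf_le_right)
      refine le_trans (inf_le_inf_left _ (hVmono (show β ≤ α + 1 by linarith))) ?_
      have h1 : ((1 : ℤ) : ℚ) = 1 := by norm_num
      have := hterm_le (p - 1) 1 (by omega)
      rw [h1] at this
      exact this
  · intro hβα
    apply le_antisymm
    · have hF_le2 : Fprime G V α p ≤ S1 ⊔ G p :=
        le_trans hF_le (sup_le (le_trans hS_le_S1Gp le_rfl)
          (le_trans (hGmono (by omega)) le_sup_right))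
      calc Fprime G V α p ⊓ V β ≤ (S1 ⊔ G p) ⊓ V β := inf_le_inf_right _ hF_le2
        _ = S1 ⊔ (G p ⊓ V β) := by rw [sup_inf_assoc_of_le _ hS1_le_Vβ]
    · refine sup_le (le_inf hS1_le_F hS1_le_Vβ) (le_inf ?_ inf_le_right)
      refine le_trans (inf_le_inf_left _ (hVmono hβα)) ?_
      have h0 : ((0 : ℤ) : ℚ) = 0 := by norm_num
      have := hterm_le p 0 (by omega)
      rw [h0, add_zero] at this
      exact this
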